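/- arXiv:1502.07974 — 3 statements merged into one kernel-verified Lean document; each statement's English description precedes it below -/
import Mathlib

section
/- Suppose t < f⋆, let x_t minimize γ(t,x) = (1/2)((f_0(x)−t)_+)² + (1/2)∑((f_i(x))_+)² with f_0, f_i continuously differentiable and convex, and assume f_0(x_t) > t. Define μ_i = (f_i(x_t))_+ / (f_0(x_t) − t). Then μ ≥ 0 and ∇f_0(x_t) + ∑_{i=1}^m μ_i ∇f_i(x_t) = 0, and consequently the dual bound f_0(x_t) + ∑_{i=1}^m μ_i f_i(x_t) ≤ f⋆ holds, where f⋆ = inf{f_0(x) : f_i(x) ≤ 0 ∀i}. -/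
open Set

/-- Derivative of `y ↦ (max y 0)^2`. -/
lemma hasDerivAt_sq_max (y : ℝ) :
    HasDerivAt (fun u : ℝ => max u 0 ^ 2) (2 * max y 0) y := by
  rcases lt_trichotomy y 0 with hy | hy | hy
  · have h : HasDerivAt (fun _ : ℝ => (0 : ℝ)) (2 * max y 0) y := by
      simpa [max_eq_right hy.le] using (hasDerivAt_const y (0 : ℝ))
    refine h.congr_of_eventuallyEq ?_
    filter_upwards [Iio_mem_nhds hy] with u hu
    simp [max_eq_right (le_of_lt (Set.mem_Iio.mp hu))]
  · subst hy
    rw [hasDerivAt_iff_tendsto_slope]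
    have heq : ∀ u : ℝ, u ≠ 0 → slope (fun u : ℝ => max u 0 ^ 2) 0 u = max u 0 := by
      intro u hu
      rcases le_or_gt u 0 with h | h
      · simp [slope_def_field, max_eq_right h]
      · rw [slope_def_field, max_eq_left h.le]
        field_simp
        simp
        ring
    have : Filter.Tendsto (fun u : ℝ => max u 0) (nhdsWithin 0 {(0:ℝ)}ᶜ) (nhds 0) := by
      have hc : Continuous fun u : ℝ => max u 0 := continuous_id.max continuous_const
      have := hc.tendsto (0:ℝ)
      simpa using this.mono_left nhdsWithin_le_nhds
    refine Filter.Tendsto.congr' ?_ (by simpa using this)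
    filter_upwards [self_mem_nhdsWithin] with u hu
    exact (heq u hu).symm
  · have h : HasDerivAt (fun u : ℝ => u ^ 2) (2 * max y 0) y := by
      simpa [max_eq_left hy.le, mul_comm] using (hasDerivAt_pow 2 y)
    refine h.congr_of_eventuallyEq ?_
    filter_upwards [Ioi_mem_nhds hy] with u hu
    simp [max_eq_left (le_of_lt (Set.mem_Ioi.mp hu))]

/-- Gradient inequality for convex functions. -/
lemma convex_grad_ineq {E : Type*} [NormedAddCommGroup E] [NormedSpace ℝ E]
    {f : E → ℝ} {f' : E →L[ℝ] ℝ} {x y : E}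
    (hc : ConvexOn ℝ Set.univ f) (hd : HasFDerivAt f f' x) :
    f x + f' (y - x) ≤ f y := by
  set L : ℝ → E := fun s => x + s • (y - x) with hL
  have hline : HasDerivAt L (y - x) 0 := by
    have : HasDerivAt (fun s : ℝ => s • (y - x)) ((1:ℝ) • (y - x)) 0 :=
      (hasDerivAt_id (0:ℝ)).smul_const (y - x)
    have h2 := this.const_add x
    rw [one_smul] at h2
    exact h2
  have hd' : HasFDerivAt f f' (L 0) := by simpa [hL] using hd
  have hg : HasDerivAt (fun s => f (L s)) (f' (y - x)) 0 := by
    exact hd'.comp_hasDerivAt 0 hline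
  have hgc : ConvexOn ℝ Set.univ (fun s => f (L s)) := by
    have haff : ∀ a b : ℝ, ∀ w : ℝ, 0 ≤ w → ∀ v : ℝ, 0 ≤ v → w + v = 1 →
        L (w * a + v * b) = w • L a + v • L b := by
      intro a b w hw v hv hwv
      simp only [hL, smul_add, smul_smul]
      rw [show w • x + (w * a) • (y - x) + (v • x + (v * b) • (y - x))
          = (w + v) • x + (w * a + v * b) • (y - x) by
        simp [add_smul]; abel]
      simp [hwv, add_smul]
    constructor
    · exact convex_univ
    · intro a _ b _ w v hw hv hwv
      show f (L (w • a + v • b)) ≤ w • f (L a) + v • f (L b)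
      rw [smul_eq_mul, smul_eq_mul, haff a b w hw v hv hwv]
      exact hc.2 (mem_univ _) (mem_univ _) hw hv hwv
  have := hgc.le_slope_of_hasDerivAt (mem_univ (0:ℝ)) (mem_univ (1:ℝ)) one_pos hg
  rw [slope_def_field] at this
  simp only [hL, zero_smul, add_zero, one_smul] at this
  have hxy : x + (y - x) = y := by abel
  rw [hxy] at this
  have h2 : f' (y - x) ≤ f y - f x := by
    have := this
    norm_num at this
    linarith
  linarith

theorem stmt_10 (n m : ℕ) (f0 : (Fin n → ℝ) → ℝ) (f : Fin m → (Fin n → ℝ) → ℝ)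
    (hf0 : ConvexOn ℝ Set.univ f0) (hf : ∀ i, ConvexOn ℝ Set.univ (f i))
    (hf0' : ContDiff ℝ 1 f0) (hf' : ∀ i, ContDiff ℝ 1 (f i))
    (γ : ℝ → (Fin n → ℝ) → ℝ)
    (hγ : γ = fun t x => (1/2 : ℝ) * (max (f0 x - t) 0) ^ 2
        + (1/2 : ℝ) * ∑ i, (max (f i x) 0) ^ 2)
    (fstar : ℝ)
    (hfstar : IsGLB {y | ∃ x, (∀ i, f i x ≤ 0) ∧ f0 x = y} fstar)
    (t : ℝ) (ht : t < fstar)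
    (xt : Fin n → ℝ) (hxt : ∀ x, γ t xt ≤ γ t x)
    (hgt : t < f0 xt)
    (μ : Fin m → ℝ) (hμ : ∀ i, μ i = max (f i xt) 0 / (f0 xt - t)) :
    (∀ i, 0 ≤ μ i) ∧
    (fderiv ℝ f0 xt + ∑ i, μ i • fderiv ℝ (f i) xt = 0) ∧
    f0 xt + ∑ i, μ i * f i xt ≤ fstar := by
  have hpos : (0:ℝ) < f0 xt - t := by linarith
  have hμnn : ∀ i, 0 ≤ μ i := fun i => by
    rw [hμ i]; exact div_nonneg (le_max_right _ _) hpos.le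
  -- derivatives
  have hd0 : HasFDerivAt f0 (fderiv ℝ f0 xt) xt :=
    (hf0'.differentiable one_ne_zero xt).hasFDerivAt
  have hdi : ∀ i, HasFDerivAt (f i) (fderiv ℝ (f i) xt) xt :=
    fun i => ((hf' i).differentiable one_ne_zero xt).hasFDerivAt
  set D0 := fderiv ℝ f0 xt
  set Df := fun i => fderiv ℝ (f i) xt
  set a0 : ℝ := max (f0 xt - t) 0
  set a : Fin m → ℝ := fun i => max (f i xt) 0
  -- derivative of γ t at xt
  have hG1 : HasFDerivAt (fun x => max (f0 x - t) 0 ^ 2) ((2 * a0) • D0) xt :=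
    ((hasDerivAt_sq_max (f0 xt - t)).comp_hasFDerivAt xt (hd0.sub_const t) :)
  have hGi : ∀ i, HasFDerivAt (fun x => max (f i x) 0 ^ 2) ((2 * a i) • Df i) xt :=
    fun i => (hasDerivAt_sq_max (f i xt)).comp_hasFDerivAt xt (hdi i)
  have hGsum : HasFDerivAt (fun x => ∑ i, max (f i x) 0 ^ 2)
      (∑ i, (2 * a i) • Df i) xt := HasFDerivAt.fun_sum (fun i _ => hGi i)
  have hG : HasFDerivAt (γ t)
      ((1/2 : ℝ) • ((2 * a0) • D0) + (1/2 : ℝ) • (∑ i, (2 * a i) • Df i)) xt := by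
    rw [hγ]
    exact (hG1.const_smul (1/2 : ℝ)).add (hGsum.const_smul (1/2 : ℝ))
  have hmin : IsLocalMin (γ t) xt := Filter.Eventually.of_forall hxt
  have hE : (1/2 : ℝ) • ((2 * a0) • D0) + (1/2 : ℝ) • (∑ i, (2 * a i) • Df i) = 0 :=
    hmin.hasFDerivAt_eq_zero hG
  have hE' : a0 • D0 + ∑ i, a i • Df i = 0 := by
    rw [← hE, Finset.smul_sum]
    congr 1
    · rw [smul_smul]; congr 1; ring
    · refine Finset.sum_congr rfl fun i _ => ?_
      rw [smul_smul]; congr 1; ring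
  have ha0 : a0 = f0 xt - t := max_eq_left hpos.le
  have hKKT : D0 + ∑ i, μ i • Df i = 0 := by
    have := congrArg (fun L => (f0 xt - t)⁻¹ • L) hE'
    simp only [smul_add, Finset.smul_sum, smul_smul, smul_zero] at this
    rw [ha0, inv_mul_cancel₀ hpos.ne', one_smul] at this
    rw [← this]
    congr 1
    refine Finset.sum_congr rfl fun i _ => ?_
    rw [hμ i, div_eq_inv_mul]
  refine ⟨hμnn, hKKT, ?_⟩
  -- weak duality
  refine hfstar.2 ?_
  rintro y ⟨x, hxfeas, rfl⟩
  have h0 := convex_grad_ineq hf0 hd0 (y := x)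
  have hi : ∀ i, f i xt + Df i (x - xt) ≤ f i x :=
    fun i => convex_grad_ineq (hf i) (hdi i) (y := x)
  have hzero : D0 (x - xt) + ∑ i, μ i * Df i (x - xt) = 0 := by
    have := congrArg (fun L : (Fin n → ℝ) →L[ℝ] ℝ => L (x - xt)) hKKT
    simpa using this
  have hsum : ∑ i, μ i * (f i xt + Df i (x - xt)) ≤ ∑ i, μ i * f i x :=
    Finset.sum_le_sum fun i _ => mul_le_mul_of_nonneg_left (hi i) (hμnn i)
  have hfeas : ∑ i, μ i * f i x ≤ 0 :=
    Finset.sum_nonpos fun i _ => mul_nonpos_of_nonneg_of_nonpos (hμnn i) (hxfeas i)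
  have hexp : ∑ i, μ i * (f i xt + Df i (x - xt))
      = ∑ i, μ i * f i xt + ∑ i, μ i * Df i (x - xt) := by
    rw [← Finset.sum_add_distrib]
    exact Finset.sum_congr rfl fun i _ => by ring
  linarith
end

section
/- Let f_0, f_1, ..., f_m : ℝ^n → ℝ be convex, let x_F be feasible (f_i(x_F) ≤ 0 for all i) and x_I satisfy f_0(x_I) < f_0(x_F). Suppose Γ ≥ 0 satisfies f_i(x_I) ≤ −Γ f_i(x_F) for all i = 1,...,m. Then f⋆ ≤ (Γ/(Γ+1)) f_0(x_F) + (1/(Γ+1)) f_0(x_I), where f⋆ = inf{f_0(x) : f_i(x) ≤ 0, i=1,...,m}. -/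
theorem stmt_12 (n m : ℕ) (f0 : (Fin n → ℝ) → ℝ) (f : Fin m → (Fin n → ℝ) → ℝ)
    (hf0 : ConvexOn ℝ Set.univ f0) (hf : ∀ i, ConvexOn ℝ Set.univ (f i))
    (xF xI : Fin n → ℝ)
    (hxF : ∀ i, f i xF ≤ 0)
    (hlt : f0 xI < f0 xF)
    (Γ : ℝ) (hΓ : 0 ≤ Γ)
    (hΓi : ∀ i, f i xI ≤ -Γ * f i xF)
    (fstar : ℝ)
    (hfstar : IsGLB {y | ∃ x, (∀ i, f i x ≤ 0) ∧ f0 x = y} fstar) :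
    fstar ≤ (Γ / (Γ + 1)) * f0 xF + (1 / (Γ + 1)) * f0 xI := by
  have hpos : (0:ℝ) < Γ + 1 := by linarith
  set a := Γ / (Γ + 1) with ha
  set b := 1 / (Γ + 1) with hb
  have ha0 : 0 ≤ a := div_nonneg hΓ hpos.le
  have hb0 : 0 ≤ b := by positivity
  have hab : a + b = 1 := by
    rw [ha, hb, ← add_div, div_self hpos.ne']
  set x := a • xF + b • xI with hx
  have hfeas : ∀ i, f i x ≤ 0 := by
    intro i
    have h1 := (hf i).2 (Set.mem_univ xF) (Set.mem_univ xI) ha0 hb0 hab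
    have h2 : a * f i xF + b * f i xI ≤ 0 := by
      have := hΓi i
      have hF := hxF i
      have : a * f i xF + b * f i xI ≤ a * f i xF + b * (-Γ * f i xF) := by nlinarith
      have heq : a * f i xF + b * (-Γ * f i xF) = 0 := by
        rw [ha, hb]; field_simp; ring
      linarith
    calc f i x ≤ a * f i xF + b * f i xI := h1
    _ ≤ 0 := h2
  have hmem : f0 x ∈ {y | ∃ x, (∀ i, f i x ≤ 0) ∧ f0 x = y} := ⟨x, hfeas, rfl⟩
  have h1 : fstar ≤ f0 x := hfstar.1 hmem
  have h2 := hf0.2 (Set.mem_univ xF) (Set.mem_univ xI) ha0 hb0 hab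
  simp only [smul_eq_mul] at h2
  calc fstar ≤ f0 x := h1
  _ ≤ a * f0 xF + b * f0 xI := h2
end

section
/- Let α : ℝ^n × ℝ^m → ℝ^n, g : ℝ^n × ℝ^m → ℝ, f : ℝ^n → ℝ, and suppose S = {x : f(x) ≤ 0} is constrained controlled invariant: for every x ∈ S there exists u with g(x,u) ≤ 0 and α(x,u) ∈ S. Given a trajectory (x_k, u_k)_{k=0}^{N} with x_{k+1} = α(x_k,u_k), g(x_k,u_k) ≤ 0 for k = 0,...,N−1, and f(x_N) ≤ 0, there exists a shifted trajectory (x̄_k, ū_k) with x̄_0 = x_1, x̄_k = x_{k+1} for k = 0,...,N−1, satisfying x̄_{k+1} = α(x̄_k, ū_k), g(x̄_k, ū_k) ≤ 0 for k=0,...,N−1, f(x̄_{N−1}) ≤ 0, f(x̄_N) ≤ 0, and ∑_{k=1}^{N−1} max{f(x̄_k),0} = ∑_{k=1}^{N−1} max{f(x_k),0} − max{f(x_1),0}. -/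
theorem stmt_16 (n m N : ℕ) (hN : 1 ≤ N)
    (α : (Fin n → ℝ) → (Fin m → ℝ) → (Fin n → ℝ))
    (g : (Fin n → ℝ) → (Fin m → ℝ) → ℝ)
    (f : (Fin n → ℝ) → ℝ)
    (hinv : ∀ z, f z ≤ 0 → ∃ v, g z v ≤ 0 ∧ f (α z v) ≤ 0)
    (x : ℕ → (Fin n → ℝ)) (u : ℕ → (Fin m → ℝ))
    (hdyn : ∀ k < N, x (k + 1) = α (x k) (u k))
    (hcon : ∀ k < N, g (x k) (u k) ≤ 0)
    (hterm : f (x N) ≤ 0) :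
    ∃ (xb : ℕ → (Fin n → ℝ)) (ub : ℕ → (Fin m → ℝ)),
      xb 0 = x 1 ∧
      (∀ k < N, xb k = x (k + 1)) ∧
      (∀ k < N, xb (k + 1) = α (xb k) (ub k)) ∧
      (∀ k < N, g (xb k) (ub k) ≤ 0) ∧
      f (xb (N - 1)) ≤ 0 ∧ f (xb N) ≤ 0 ∧
      (∑ k ∈ Finset.Ico 1 N, max (f (xb k)) 0)
        = (∑ k ∈ Finset.Ico 1 N, max (f (x k)) 0) - max (f (x 1)) 0 := by
  obtain ⟨v, hgv, hfv⟩ := hinv (x N) hterm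
  refine ⟨fun k => if k < N then x (k + 1) else α (x N) v,
          fun k => if k + 1 < N then u (k + 1) else v, ?_, ?_, ?_, ?_, ?_, ?_, ?_⟩
  · beta_reduce
    rw [if_pos (by omega : 0 < N)]
  · intro k hk; simp [hk]
  · intro k hk
    by_cases h : k + 1 < N
    · beta_reduce
      simp only [if_pos h, if_pos hk, if_pos (Nat.lt_of_succ_lt h)]
      exact hdyn (k + 1) h
    · have hkN : k + 1 = N := le_antisymm hk (not_lt.mp h)
      beta_reduce
      rw [if_pos hk, if_neg h, if_neg (by omega : ¬ k + 1 < N), hkN]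
  · intro k hk
    by_cases h : k + 1 < N
    · beta_reduce
      simp only [if_pos h, if_pos hk]
      exact hcon (k + 1) h
    · have hkN : k + 1 = N := le_antisymm hk (not_lt.mp h)
      beta_reduce
      rw [if_pos hk, if_neg h, hkN]
      exact hgv
  · have h1 : N - 1 < N := Nat.sub_lt hN one_pos
    have h2 : N - 1 + 1 = N := Nat.succ_pred_eq_of_pos hN
    beta_reduce
    rw [if_pos h1, h2]
    exact hterm
  · simp [hfv]
  · have hsum : (∑ k ∈ Finset.Ico 1 N,
        max (f (if k < N then x (k + 1) else α (x N) v)) 0)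
        = ∑ k ∈ Finset.Ico 1 N, max (f (x (k + 1))) 0 := by
      apply Finset.sum_congr rfl
      intro k hk
      rw [if_pos (Finset.mem_Ico.mp hk).2]
    rw [hsum]
    have hN0 : max (f (x N)) 0 = 0 := max_eq_right hterm
    rcases eq_or_lt_of_le hN with h1 | h1
    · have : x 1 = x N := by rw [← h1]
      simp [← h1, this.symm ▸ hN0, this, hN0]
    · -- N ≥ 2
      have shift : (∑ k ∈ Finset.Ico 1 N, max (f (x (k + 1))) 0)
          = ∑ k ∈ Finset.Ico 2 (N + 1), max (f (x k)) 0 := by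
        rw [← Finset.sum_Ico_add (fun k => max (f (x k)) 0) 1 N 1]
        exact Finset.sum_congr rfl fun k _ => by rw [add_comm]
      rw [shift, Finset.sum_Ico_succ_top (by omega : 2 ≤ N), hN0, add_zero,
        Finset.sum_eq_sum_Ico_succ_bot h1]
      ring
end
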